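/- Suppose q^*(r) := sup_{ℓ∈S^{n-1}} q^U(rℓ) satisfies q^*(r) ≤ κ inf_{ℓ∈S^{n-1}} q^L(rℓ) for all r ≥ 1 with some κ ≥ 1, where q^U, q^L are upper/lower symbols of a Lévy measure μ. Then q^*(r) ≥ c r^{2/κ} for all r ≥ 1, with c = q^*(1) (assuming q^*(1) > 0). -/

import Mathlib

open MeasureTheory Set Function
open scoped ENNReal


lemma aux_iter (α : ℝ) (hα : 0 < α) (f : ℝ → ℝ≥0∞)
    (hf : ∀ a b : ℝ, 1 ≤ a → a ≤ b →
      ENNReal.ofReal (1 + α * (Real.log b - Real.log a)) * f a ≤ f b) :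
    ∀ r : ℝ, 1 ≤ r → ENNReal.ofReal (r ^ α) * f 1 ≤ f r := by
  intro r hr
  have hr0 : (0:ℝ) < r := lt_of_lt_of_le one_pos hr
  set t : ℝ := Real.log r with ht
  have ht0 : 0 ≤ t := Real.log_nonneg hr
  have key : ∀ N : ℕ, 1 ≤ N →
      ENNReal.ofReal ((1 + α * t / N) ^ N) * f 1 ≤ f r := by
    intro N hN
    have hNpos : (0:ℝ) < N := by exact_mod_cast hN
    have step : ∀ k : ℕ, k ≤ N →
        (ENNReal.ofReal (1 + α * t / N)) ^ k * f 1 ≤ f (r ^ ((k : ℝ) / N)) := by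
      intro k hk
      induction k with
      | zero => simp [Real.rpow_zero]
      | succ m ih =>
        have hm : m ≤ N := Nat.le_of_succ_le hk
        have ihm := ih hm
        have h1le : (1:ℝ) ≤ r ^ ((m : ℝ) / N) :=
          Real.one_le_rpow hr (by positivity)
        have hle : r ^ ((m : ℝ) / N) ≤ r ^ (((m:ℝ) + 1) / N) :=
          Real.rpow_le_rpow_of_exponent_le hr
            (by gcongr; linarith)
        have hstep := hf (r ^ ((m : ℝ) / N)) (r ^ (((m:ℝ) + 1) / N)) h1le hle
        have hlog : Real.log (r ^ (((m:ℝ) + 1) / N)) - Real.log (r ^ ((m : ℝ) / N))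
            = α⁻¹ * 0 + t / N := by
          rw [Real.log_rpow hr0, Real.log_rpow hr0]
          field_simp
          ring
        rw [hlog] at hstep
        simp only [mul_zero, zero_add] at hstep
        calc ENNReal.ofReal (1 + α * t / N) ^ (m+1) * f 1
            = ENNReal.ofReal (1 + α * t / N) *
              (ENNReal.ofReal (1 + α * t / N) ^ m * f 1) := by ring
          _ ≤ ENNReal.ofReal (1 + α * t / N) * f (r ^ ((m : ℝ) / N)) := by
              exact mul_le_mul_right ihm _
          _ ≤ f (r ^ (((m:ℝ) + 1) / N)) := by
              have : α * t / N = α * (t / N) := by ring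
              rw [← this] at hstep
              convert hstep using 3
          _ = f (r ^ (((m+1 : ℕ) : ℝ) / N)) := by norm_num
    have := step N le_rfl
    rw [div_self (ne_of_gt hNpos), Real.rpow_one] at this
    calc ENNReal.ofReal ((1 + α * t / N) ^ N) * f 1
        = (ENNReal.ofReal (1 + α * t / N)) ^ N * f 1 := by
          rw [ENNReal.ofReal_pow (by positivity)]
      _ ≤ f r := this
  -- take the limit N → ∞
  have hlim : Filter.Tendsto
      (fun N : ℕ => ENNReal.ofReal ((1 + α * t / N) ^ N) * f 1)
      Filter.atTop (nhds (ENNReal.ofReal (Real.exp (α * t)) * f 1)) := by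
    apply ENNReal.Tendsto.mul_const
    · exact (ENNReal.continuous_ofReal.tendsto _).comp (Real.tendsto_one_add_div_pow_exp (α * t))
    · left
      simp [Real.exp_ne_zero, Real.exp_pos]
  have hfinal : ENNReal.ofReal (Real.exp (α * t)) * f 1 ≤ f r :=
    le_of_tendsto hlim (Filter.eventually_atTop.2 ⟨1, key⟩)
  have : r ^ α = Real.exp (α * t) := by
    rw [Real.rpow_def_of_pos hr0, mul_comm]
  rwa [this]


-- ∫⁻ r in Ioc c d, ofReal (2*r*v^2) = ofReal ((d^2-c^2)*v^2)
lemma aux_sub (v c d : ℝ) (hc : 0 ≤ c) (hcd : c ≤ d) :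
    ∫⁻ r in Set.Ioc c d, ENNReal.ofReal (2 * r * v ^ 2) =
      ENNReal.ofReal ((d ^ 2 - c ^ 2) * v ^ 2) := by
  have hcont : Continuous fun r : ℝ => 2 * r * v ^ 2 := by continuity
  have hint : IntegrableOn (fun r : ℝ => 2 * r * v ^ 2) (Set.Ioc c d) volume :=
    hcont.integrableOn_Ioc
  rw [← ofReal_integral_eq_lintegral_ofReal hint]
  · congr 1
    rw [← intervalIntegral.integral_of_le hcd]
    have : ∀ r : ℝ, 2 * r * v ^ 2 = (2 * v ^ 2) * r := by intro r; ring
    simp_rw [this]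
    rw [intervalIntegral.integral_const_mul, integral_id]
    ring
  · filter_upwards [ae_restrict_mem measurableSet_Ioc] with r hr
    have : 0 < r := lt_of_le_of_lt hc hr.1
    positivity

lemma aux_point (v a b : ℝ) (ha : 0 < a) (hab : a ≤ b) :
    ENNReal.ofReal (min ((b * v) ^ 2) 1) = ENNReal.ofReal (min ((a * v) ^ 2) 1)
      + ∫⁻ r in Set.Ioc a b,
          (if r * |v| < 1 then ENNReal.ofReal (2 * r * v ^ 2) else 0) := by
  rcases eq_or_ne v 0 with rfl | hv
  · simp
  · have hw : 0 < |v| := abs_pos.2 hv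
    have hset : (fun r : ℝ => if r * |v| < 1 then ENNReal.ofReal (2 * r * v ^ 2) else 0)
        = (Set.Iio (|v|)⁻¹).indicator (fun r => ENNReal.ofReal (2 * r * v ^ 2)) := by
      funext r
      have : r * |v| < 1 ↔ r < (|v|)⁻¹ := by
        rw [show (|v|)⁻¹ = 1 / |v| from (one_div _).symm, lt_div_iff₀ hw]
      simp [Set.indicator_apply, Set.mem_Iio, this]
    rw [hset, lintegral_indicator measurableSet_Iio, Measure.restrict_restrict measurableSet_Iio]
    rcases le_or_gt (|v|)⁻¹ a with hcase | hcase
    · -- threshold below a : integral is zero, both mins equal 1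
      have hempty : Set.Iio (|v|)⁻¹ ∩ Set.Ioc a b = ∅ := by
        ext r; simp only [Set.mem_inter_iff, Set.mem_Iio, Set.mem_Ioc, Set.mem_empty_iff_false,
          iff_false, not_and]
        intro hlt hmem hmem2; linarith
      rw [hempty]
      have h1 : (1:ℝ) ≤ (a * v) ^ 2 := by
        have : 1 ≤ a * |v| := by
          rw [← inv_mul_cancel₀ (ne_of_gt hw)]
          exact mul_le_mul_of_nonneg_right hcase (le_of_lt hw)
        calc (1:ℝ) = 1 ^ 2 := by ring
          _ ≤ (a * |v|) ^ 2 := by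
              apply pow_le_pow_left₀ (by norm_num) this
          _ = (a * v) ^ 2 := by rw [mul_pow, mul_pow, sq_abs]
      have h2 : (1:ℝ) ≤ (b * v) ^ 2 := by
        calc (1:ℝ) ≤ (a * v) ^ 2 := h1
          _ ≤ (b * v) ^ 2 := by
              rw [mul_pow, mul_pow]
              apply mul_le_mul_of_nonneg_right _ (sq_nonneg v)
              apply pow_le_pow_left₀ (le_of_lt ha) hab
      rw [min_eq_right h1, min_eq_right h2]
      simp
    · -- threshold above a
      set c : ℝ := min b (|v|)⁻¹ with hc
      have hac : a ≤ c := le_min hab (le_of_lt hcase)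
      have hrestr : volume.restrict (Set.Iio (|v|)⁻¹ ∩ Set.Ioc a b)
          = volume.restrict (Set.Ioc a c) := by
        rcases lt_or_ge b ((|v|)⁻¹) with hb | hb
        · have hceq : c = b := min_eq_left (le_of_lt hb)
          have hseteq : Set.Iio (|v|)⁻¹ ∩ Set.Ioc a b = Set.Ioc a c := by
            rw [hceq]; ext r
            simp only [Set.mem_inter_iff, Set.mem_Iio, Set.mem_Ioc]
            constructor
            · rintro ⟨_, h⟩; exact h
            · intro h; exact ⟨lt_of_le_of_lt h.2 hb, h⟩
          rw [hseteq]
        · have hceq : c = (|v|)⁻¹ := min_eq_right hb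
          have hseteq : Set.Iio (|v|)⁻¹ ∩ Set.Ioc a b = Set.Ioo a ((|v|)⁻¹) := by
            ext r
            simp only [Set.mem_inter_iff, Set.mem_Iio, Set.mem_Ioc, Set.mem_Ioo]
            constructor
            · rintro ⟨h1, h2, _⟩; exact ⟨h2, h1⟩
            · rintro ⟨h1, h2⟩; exact ⟨h2, h1, le_trans (le_of_lt h2) hb⟩
          rw [hseteq, hceq, Measure.restrict_congr_set Ioo_ae_eq_Ioc]
      rw [hrestr, aux_sub v a c (le_of_lt ha) hac]
      have hav : (a * v) ^ 2 < 1 := by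
        have h1 : a * |v| < 1 := by
          rw [← inv_mul_cancel₀ (ne_of_gt hw)]
          exact mul_lt_mul_of_pos_right hcase hw
        calc (a * v) ^ 2 = (a * |v|) ^ 2 := by rw [mul_pow, mul_pow, sq_abs]
          _ < 1 ^ 2 := by
              apply pow_lt_pow_left₀ h1 (by positivity)
              norm_num
          _ = 1 := by ring
      rw [min_eq_left (le_of_lt hav)]
      have hc2 : a ^ 2 ≤ c ^ 2 := by nlinarith
      rw [← ENNReal.ofReal_add (by positivity) (mul_nonneg (by linarith) (sq_nonneg v))]
      congr 1
      rcases le_total b ((|v|)⁻¹) with hb | hb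
      · have : c = b := min_eq_left hb
        rw [this]
        have hbv : (b * v) ^ 2 ≤ 1 := by
          have h1 : b * |v| ≤ 1 := by
            rw [← inv_mul_cancel₀ (ne_of_gt hw)]
            exact mul_le_mul_of_nonneg_right hb (le_of_lt hw)
          calc (b * v) ^ 2 = (b * |v|) ^ 2 := by rw [mul_pow, mul_pow, sq_abs]
            _ ≤ 1 ^ 2 := by
                apply pow_le_pow_left₀ (by nlinarith) h1
            _ = 1 := by ring
        rw [min_eq_left hbv]; ring
      · have : c = (|v|)⁻¹ := min_eq_right hb
        rw [this]
        have hbv : (1:ℝ) ≤ (b * v) ^ 2 := by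
          have h1 : 1 ≤ b * |v| := by
            rw [← inv_mul_cancel₀ (ne_of_gt hw)]
            exact mul_le_mul_of_nonneg_right hb (le_of_lt hw)
          calc (1:ℝ) = 1 ^ 2 := by ring
            _ ≤ (b * |v|) ^ 2 := by apply pow_le_pow_left₀ (by norm_num) h1
            _ = (b * v) ^ 2 := by rw [mul_pow, mul_pow, sq_abs]
        rw [min_eq_right hbv]
        have : ((|v|)⁻¹) ^ 2 * v ^ 2 = 1 := by
          rw [← sq_abs v]
          field_simp
        nlinarith [this]


lemma aux_log (a b : ℝ) (ha : 0 < a) (hab : a ≤ b) :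
    ∫⁻ r in Set.Ioc a b, ENNReal.ofReal (2 / r) =
      ENNReal.ofReal (2 * (Real.log b - Real.log a)) := by
  have hb : 0 < b := lt_of_lt_of_le ha hab
  have hcont : ContinuousOn (fun r : ℝ => 2 / r) (Set.Icc a b) := by
    apply ContinuousOn.div continuousOn_const continuousOn_id
    intro x hx; exact ne_of_gt (lt_of_lt_of_le ha hx.1)
  have hint : IntegrableOn (fun r : ℝ => 2 / r) (Set.Ioc a b) volume :=
    (hcont.integrableOn_Icc).mono_set Set.Ioc_subset_Icc_self
  rw [← ofReal_integral_eq_lintegral_ofReal hint]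
  · congr 1
    rw [← intervalIntegral.integral_of_le hab]
    have : ∀ r : ℝ, 2 / r = 2 * (1 / r) := by intro r; ring
    simp_rw [this]
    rw [intervalIntegral.integral_const_mul, integral_one_div]
    · rw [Real.log_div (ne_of_gt hb) (ne_of_gt ha)]
    · intro h
      rw [Set.uIcc_of_le hab] at h
      exact absurd h.1 (not_le.2 ha)
  · filter_upwards [ae_restrict_mem measurableSet_Ioc] with r hr
    have : 0 < r := lt_of_lt_of_le ha (le_of_lt hr.1)
    positivity

lemma aux_step {α : Type*} [MeasurableSpace α] (μ : Measure α) [SigmaFinite μ]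
    (w : α → ℝ) (hw : Measurable w) (κ : ℝ) (hκ : 1 ≤ κ) (a b : ℝ)
    (ha : 1 ≤ a) (hab : a ≤ b)
    (hcomp' : ∀ r : ℝ, a ≤ r → r ≤ b →
      (∫⁻ h, ENNReal.ofReal (min ((a * w h) ^ 2) 1) ∂μ) ≤ ENNReal.ofReal κ *
        ∫⁻ h in {h | 0 < |r * w h| ∧ |r * w h| ≤ 1},
          ENNReal.ofReal ((r * w h) ^ 2) ∂μ) :
    ENNReal.ofReal (1 + (2 / κ) * (Real.log b - Real.log a)) *
      (∫⁻ h, ENNReal.ofReal (min ((a * w h) ^ 2) 1) ∂μ)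
      ≤ ∫⁻ h, ENNReal.ofReal (min ((b * w h) ^ 2) 1) ∂μ := by
  have ha0 : (0:ℝ) < a := lt_of_lt_of_le one_pos ha
  have hκ0 : (0:ℝ) < κ := lt_of_lt_of_le one_pos hκ
  set d : ℝ≥0∞ := ∫⁻ h, ENNReal.ofReal (min ((a * w h) ^ 2) 1) ∂μ with hd
  set I : Set ℝ := Set.Ioc a b with hI
  set G : α → ℝ → ℝ≥0∞ :=
    fun h r => if r * |w h| < 1 then ENNReal.ofReal (2 * r * (w h) ^ 2) else 0 with hG
  have hGmeas : Measurable (uncurry G) := by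
    apply Measurable.ite
    · exact measurableSet_lt (measurable_snd.mul (hw.comp measurable_fst).abs)
        measurable_const
    · exact ((measurable_const.mul measurable_snd).mul
        ((hw.comp measurable_fst).pow_const 2)).ennreal_ofReal
    · exact measurable_const
  have hameas : Measurable fun h => ENNReal.ofReal (min ((a * w h) ^ 2) 1) :=
    (((measurable_const.mul hw).pow_const 2).min measurable_const).ennreal_ofReal
  -- Step 1 : decomposition
  have step1 : ∫⁻ h, ENNReal.ofReal (min ((b * w h) ^ 2) 1) ∂μ
      = d + ∫⁻ r in I, ∫⁻ h, G h r ∂μ := by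
    have hpt : ∀ h, ENNReal.ofReal (min ((b * w h) ^ 2) 1)
        = ENNReal.ofReal (min ((a * w h) ^ 2) 1) + ∫⁻ r in I, G h r := fun h =>
      aux_point (w h) a b ha0 hab
    simp_rw [hpt]
    rw [lintegral_add_left hameas]
    congr 1
    exact lintegral_lintegral_swap hGmeas.aemeasurable
  -- a.e. vanishing of the level sets
  have Meq : ∀ᵐ r ∂(volume.restrict I), μ {h | r * |w h| = 1} = 0 := by
    set s : Set (ℝ × α) := {p | p.1 * |w p.2| = 1} with hs
    have hsmeas : MeasurableSet s :=
      measurableSet_eq_fun (measurable_fst.mul (hw.comp measurable_snd).abs)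
        measurable_const
    have Mmeas : Measurable fun r => μ (Prod.mk r ⁻¹' s) :=
      measurable_measure_prodMk_left hsmeas
    have hzero : ∫⁻ r in I, μ (Prod.mk r ⁻¹' s) = 0 := by
      have hrw : ∀ r : ℝ, μ (Prod.mk r ⁻¹' s)
          = ∫⁻ h, s.indicator (fun _ => (1:ℝ≥0∞)) (r, h) ∂μ := by
        intro r
        rw [← lintegral_indicator_one (measurable_prodMk_left hsmeas)]
        rfl
      simp_rw [hrw]
      rw [lintegral_lintegral_swap]
      · have inner_zero : ∀ h, ∫⁻ r in I, s.indicator (fun _ => (1:ℝ≥0∞)) (r, h) = 0 := by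
          intro h
          have hmeasset : MeasurableSet {r : ℝ | r * |w h| = 1} :=
            measurableSet_eq_fun (measurable_id.mul measurable_const) measurable_const
          have heq : (fun r : ℝ => s.indicator (fun _ => (1:ℝ≥0∞)) (r, h))
              = ({r : ℝ | r * |w h| = 1}).indicator (fun _ => (1:ℝ≥0∞)) := by
            funext r
            by_cases hc : r * |w h| = 1 <;>
              simp [Set.indicator_apply, Set.mem_setOf_eq, hs, hc]
          rw [heq, lintegral_indicator hmeasset]
          have hnull : volume {r : ℝ | r * |w h| = 1} = 0 := by
            apply Set.Subsingleton.measure_zero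
            intro r1 h1 r2 h2
            simp only [Set.mem_setOf_eq] at h1 h2
            have hne : |w h| ≠ 0 := by
              intro h0; rw [h0, mul_zero] at h1; exact one_ne_zero h1.symm
            exact mul_right_cancel₀ hne (h1.trans h2.symm)
          rw [lintegral_one, Measure.restrict_restrict hmeasset, Measure.restrict_apply_univ]
          exact measure_mono_null Set.inter_subset_left hnull
        simp_rw [inner_zero]
        exact lintegral_zero
      · exact (measurable_one.indicator hsmeas).aemeasurable
    have := (lintegral_eq_zero_iff Mmeas).1 hzero
    filter_upwards [this] with r hr
    exact hr
  -- a.e. lower bound for the inner integral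
  have step2 : ∀ᵐ r ∂(volume.restrict I),
      ENNReal.ofReal (2 / r) * (d / ENNReal.ofReal κ) ≤ ∫⁻ h, G h r ∂μ := by
    filter_upwards [Meq, ae_restrict_mem measurableSet_Ioc] with r hM hr
    have hr0 : (0:ℝ) < r := lt_of_lt_of_le ha0 (le_of_lt hr.1)
    set K : ℝ≥0∞ := ∫⁻ h, (if r * |w h| < 1 then ENNReal.ofReal ((r * w h) ^ 2) else 0) ∂μ
      with hK
    have hKmeas : Measurable fun h =>
        (if r * |w h| < 1 then ENNReal.ofReal ((r * w h) ^ 2) else 0) := by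
      apply Measurable.ite
      · exact measurableSet_lt (measurable_const.mul hw.abs) measurable_const
      · exact ((measurable_const.mul hw).pow_const 2).ennreal_ofReal
      · exact measurable_const
    have e1 : ∫⁻ h, G h r ∂μ = ENNReal.ofReal (2 / r) * K := by
      rw [hK, ← lintegral_const_mul _ hKmeas]
      congr 1; funext h
      simp only [hG, mul_ite, mul_zero]
      congr 1
      rw [← ENNReal.ofReal_mul (by positivity)]
      congr 1
      field_simp
    have hS1 : MeasurableSet {h : α | r * |w h| < 1} :=
      measurableSet_lt (measurable_const.mul hw.abs) measurable_const
    have hS2 : MeasurableSet {h : α | r * |w h| = 1} :=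
      measurableSet_eq_fun (measurable_const.mul hw.abs) measurable_const
    have e3 : (∫⁻ h in {h | 0 < |r * w h| ∧ |r * w h| ≤ 1},
        ENNReal.ofReal ((r * w h) ^ 2) ∂μ) ≤ K := by
      have habs : ∀ h, |r * w h| = r * |w h| := by
        intro h; rw [abs_mul, abs_of_pos hr0]
      have hsub : {h : α | 0 < |r * w h| ∧ |r * w h| ≤ 1}
          ⊆ {h : α | r * |w h| < 1} ∪ {h : α | r * |w h| = 1} := by
        intro h hh
        simp only [Set.mem_setOf_eq, habs] at hh ⊢
        rcases lt_or_eq_of_le hh.2 with h1 | h1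
        · exact Or.inl h1
        · exact Or.inr h1
      calc (∫⁻ h in {h | 0 < |r * w h| ∧ |r * w h| ≤ 1},
            ENNReal.ofReal ((r * w h) ^ 2) ∂μ)
          ≤ ∫⁻ h in ({h : α | r * |w h| < 1} ∪ {h : α | r * |w h| = 1}),
            ENNReal.ofReal ((r * w h) ^ 2) ∂μ := lintegral_mono_set hsub
        _ ≤ (∫⁻ h in {h : α | r * |w h| < 1}, ENNReal.ofReal ((r * w h) ^ 2) ∂μ)
            + ∫⁻ h in {h : α | r * |w h| = 1}, ENNReal.ofReal ((r * w h) ^ 2) ∂μ :=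
            lintegral_union_le _ _ _
        _ ≤ K + 0 := by
            apply add_le_add
            · rw [hK, ← lintegral_indicator hS1]
              apply lintegral_mono
              intro h
              by_cases hc : r * |w h| < 1 <;>
                simp [Set.indicator_apply, Set.mem_setOf_eq, hc]
            · have : (∫⁻ h in {h : α | r * |w h| = 1},
                  ENNReal.ofReal ((r * w h) ^ 2) ∂μ)
                  = ∫⁻ _ in {h : α | r * |w h| = 1}, (1:ℝ≥0∞) ∂μ := by
                apply setLIntegral_congr_fun hS2
                intro h hh
                dsimp only
                have hh' : r * |w h| = 1 := hh
                have : (r * w h) ^ 2 = 1 := by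
                  have := habs h
                  nlinarith [sq_abs (r * w h)]
                rw [this]; simp
              rw [this, setLIntegral_one, hM]
        _ = K := add_zero K
    have e2 : d ≤ ENNReal.ofReal κ * K :=
      le_trans (hcomp' r (le_of_lt hr.1) hr.2) (mul_le_mul_right e3 _)
    have e4 : d / ENNReal.ofReal κ ≤ K := by
      rw [ENNReal.div_le_iff_le_mul (Or.inl (by simp [hκ0])) (Or.inl ENNReal.ofReal_ne_top)]
      rwa [mul_comm] at e2
    rw [e1]
    exact mul_le_mul_right e4 _
  -- Step 3 : integrate the lower bound
  have step3 : (d / ENNReal.ofReal κ) * ENNReal.ofReal (2 * (Real.log b - Real.log a))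
      ≤ ∫⁻ r in I, ∫⁻ h, G h r ∂μ := by
    calc (d / ENNReal.ofReal κ) * ENNReal.ofReal (2 * (Real.log b - Real.log a))
        = (d / ENNReal.ofReal κ) * ∫⁻ r in I, ENNReal.ofReal (2 / r) := by
          rw [aux_log a b ha0 hab]
      _ = ∫⁻ r in I, ENNReal.ofReal (2 / r) * (d / ENNReal.ofReal κ) := by
          have hm2 : Measurable fun r : ℝ => ENNReal.ofReal (2 / r) := by fun_prop
          rw [lintegral_mul_const _ hm2, mul_comm]
      _ ≤ ∫⁻ r in I, ∫⁻ h, G h r ∂μ := lintegral_mono_ae step2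
  -- Step 4 : conclude
  have hΔ : 0 ≤ Real.log b - Real.log a := by
    have := Real.log_le_log ha0 hab
    linarith
  calc ENNReal.ofReal (1 + (2 / κ) * (Real.log b - Real.log a)) * d
      = (1 + ENNReal.ofReal ((2 / κ) * (Real.log b - Real.log a))) * d := by
        rw [ENNReal.ofReal_add zero_le_one (by positivity), ENNReal.ofReal_one]
    _ = d + ENNReal.ofReal ((2 / κ) * (Real.log b - Real.log a)) * d := by
        rw [add_mul, one_mul]
    _ = d + (d / ENNReal.ofReal κ) * ENNReal.ofReal (2 * (Real.log b - Real.log a)) := by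
        congr 1
        rw [show (2 / κ) * (Real.log b - Real.log a)
            = (2 * (Real.log b - Real.log a)) / κ by ring,
          ENNReal.ofReal_div_of_pos hκ0, div_eq_mul_inv, div_eq_mul_inv]
        ring
    _ ≤ d + ∫⁻ r in I, ∫⁻ h, G h r ∂μ := add_le_add_right step3 _
    _ = ∫⁻ h, ENNReal.ofReal (min ((b * w h) ^ 2) 1) ∂μ := step1.symm

/-- If `q^*(r) = sup_{‖ℓ‖=1} q^U(rℓ)` satisfies
`q^*(r) ≤ κ inf_{‖ℓ‖=1} q^L(rℓ)` for all `r ≥ 1` (with `κ ≥ 1`), then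
`q^*(r) ≥ q^*(1) · r^{2/κ}` for all `r ≥ 1`, provided `q^*(1) > 0`. -/
theorem stmt12 {n : ℕ} (hn : 1 ≤ n)
    (μ : Measure (EuclideanSpace ℝ (Fin n))) (hμ0 : μ {0} = 0)
    (hμ : ∫⁻ h, ENNReal.ofReal (min 1 (‖h‖ ^ 2)) ∂μ < ⊤)
    (κ : ℝ) (hκ : 1 ≤ κ)
    (qU qL : EuclideanSpace ℝ (Fin n) → ℝ≥0∞) (qstar : ℝ → ℝ≥0∞)
    (hqU : ∀ ξ, qU ξ = ∫⁻ h, ENNReal.ofReal (min ((inner ℝ ξ h : ℝ) ^ 2) 1) ∂μ)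
    (hqL : ∀ ξ, qL ξ = ∫⁻ h in {h | 0 < |(inner ℝ ξ h : ℝ)| ∧ |(inner ℝ ξ h : ℝ)| ≤ 1},
        ENNReal.ofReal ((inner ℝ ξ h : ℝ) ^ 2) ∂μ)
    (hqstar : ∀ r : ℝ, qstar r
        = ⨆ ℓ : {ℓ : EuclideanSpace ℝ (Fin n) // ‖ℓ‖ = 1},
            qU (r • (ℓ : EuclideanSpace ℝ (Fin n))))
    (hcomp : ∀ r : ℝ, 1 ≤ r →
        qstar r ≤ ENNReal.ofReal κ *
          ⨅ ℓ : {ℓ : EuclideanSpace ℝ (Fin n) // ‖ℓ‖ = 1},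
            qL (r • (ℓ : EuclideanSpace ℝ (Fin n))))
    (hpos : 0 < qstar 1) :
    ∀ r : ℝ, 1 ≤ r → qstar 1 * ENNReal.ofReal (r ^ (2 / κ)) ≤ qstar r := by
  have hκ0 : (0:ℝ) < κ := lt_of_lt_of_le one_pos hκ
  -- finiteness of μ away from the origin
  have hfin : ∀ ε : ℝ, 0 < ε → μ {h : EuclideanSpace ℝ (Fin n) | ε ≤ ‖h‖} < ⊤ := by
    intro ε hε
    have hset : MeasurableSet {h : EuclideanSpace ℝ (Fin n) | ε ≤ ‖h‖} :=
      (isClosed_le continuous_const continuous_norm).measurableSet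
    have hlb : ENNReal.ofReal (min 1 (ε ^ 2)) * μ {h : EuclideanSpace ℝ (Fin n) | ε ≤ ‖h‖}
        ≤ ∫⁻ h, ENNReal.ofReal (min 1 (‖h‖ ^ 2)) ∂μ := by
      calc ENNReal.ofReal (min 1 (ε ^ 2)) * μ {h : EuclideanSpace ℝ (Fin n) | ε ≤ ‖h‖}
          = ∫⁻ _ in {h : EuclideanSpace ℝ (Fin n) | ε ≤ ‖h‖}, ENNReal.ofReal (min 1 (ε ^ 2)) ∂μ :=
            (setLIntegral_const _ _).symm
        _ ≤ ∫⁻ h in {h : EuclideanSpace ℝ (Fin n) | ε ≤ ‖h‖}, ENNReal.ofReal (min 1 (‖h‖ ^ 2)) ∂μ := by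
            apply lintegral_mono_ae
            filter_upwards [ae_restrict_mem hset] with h hh
            apply ENNReal.ofReal_le_ofReal
            apply min_le_min le_rfl
            have : (0:ℝ) ≤ ε := le_of_lt hε
            nlinarith [hh, norm_nonneg (E := EuclideanSpace ℝ (Fin n)) h]
        _ ≤ ∫⁻ h, ENNReal.ofReal (min 1 (‖h‖ ^ 2)) ∂μ := setLIntegral_le_lintegral _ _
    by_contra hcon
    push_neg at hcon
    have hne : ENNReal.ofReal (min 1 (ε ^ 2)) ≠ 0 := by
      have : (0:ℝ) < min 1 (ε ^ 2) := by positivity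
      exact ne_of_gt (ENNReal.ofReal_pos.2 this)
    rw [top_le_iff.1 hcon, ENNReal.mul_top hne] at hlb
    exact (not_le.2 hμ) hlb
  haveI hSF : SigmaFinite μ := by
    refine ⟨⟨⟨fun k => {0} ∪ {h : EuclideanSpace ℝ (Fin n) | 1 / (k + 1) ≤ ‖h‖}, fun _ => trivial, ?_, ?_⟩⟩⟩
    · intro k
      apply lt_of_le_of_lt (measure_union_le _ _)
      rw [hμ0, zero_add]
      exact hfin _ (by positivity)
    · apply Set.eq_univ_of_forall
      intro h
      rcases eq_or_ne h 0 with rfl | hh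
      · exact Set.mem_iUnion.2 ⟨0, Or.inl rfl⟩
      · have hnorm : (0:ℝ) < ‖h‖ := norm_pos_iff.2 hh
        obtain ⟨k, hk⟩ := exists_nat_gt (1 / ‖h‖)
        refine Set.mem_iUnion.2 ⟨k, Or.inr ?_⟩
        have hk1 : 1 / ‖h‖ < (k:ℝ) + 1 := lt_of_lt_of_le hk (by linarith)
        have : 1 / ((k:ℝ) + 1) < ‖h‖ := by
          rw [div_lt_iff₀ (by positivity)] at hk1 ⊢
          · nlinarith
        exact le_of_lt this
  -- main per-direction estimate
  have main : ∀ ℓ : {ℓ : EuclideanSpace ℝ (Fin n) // ‖ℓ‖ = 1}, ∀ r : ℝ, 1 ≤ r →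
      ENNReal.ofReal (r ^ (2 / κ)) * qU ((1:ℝ) • (ℓ : EuclideanSpace ℝ (Fin n))) ≤ qU (r • (ℓ : EuclideanSpace ℝ (Fin n))) := by
    rintro ⟨ℓ, hℓ⟩ r hr
    set w : EuclideanSpace ℝ (Fin n) → ℝ := fun h => (inner ℝ ℓ h : ℝ) with hwdef
    have hw : Measurable w := (continuous_const.inner continuous_id).measurable
    have hinner : ∀ (c : ℝ) (h : EuclideanSpace ℝ (Fin n)), (inner ℝ (c • ℓ) h : ℝ) = c * w h := by
      intro c h
      exact real_inner_smul_left ℓ h c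
    have hqU' : ∀ c : ℝ, qU (c • ℓ) = ∫⁻ h, ENNReal.ofReal (min ((c * w h) ^ 2) 1) ∂μ := by
      intro c
      rw [hqU]
      simp_rw [hinner]
    have hqL' : ∀ c : ℝ, qL (c • ℓ)
        = ∫⁻ h in {h | 0 < |c * w h| ∧ |c * w h| ≤ 1},
            ENNReal.ofReal ((c * w h) ^ 2) ∂μ := by
      intro c
      rw [hqL]
      simp_rw [hinner]
    -- monotonicity of qU along rays
    have hmono : ∀ a c : ℝ, 0 ≤ a → a ≤ c → qU (a • ℓ) ≤ qU (c • ℓ) := by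
      intro a c ha hac
      rw [hqU' a, hqU' c]
      apply lintegral_mono
      intro h
      apply ENNReal.ofReal_le_ofReal
      apply min_le_min _ le_rfl
      have h1 : a ^ 2 ≤ c ^ 2 := by nlinarith
      nlinarith [mul_le_mul_of_nonneg_right h1 (sq_nonneg (w h))]
    have hiter := aux_iter (2 / κ) (by positivity)
      (fun c => ∫⁻ h, ENNReal.ofReal (min ((c * w h) ^ 2) 1) ∂μ) ?_ r hr
    · rw [hqU' 1, hqU' r]
      exact hiter
    · intro a b ha hab
      apply aux_step μ w hw κ hκ a b ha hab
      intro s hsa hsb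
      have hs1 : (1:ℝ) ≤ s := le_trans ha hsa
      calc (∫⁻ h, ENNReal.ofReal (min ((a * w h) ^ 2) 1) ∂μ)
          = qU (a • ℓ) := (hqU' a).symm
        _ ≤ qU (s • ℓ) := hmono a s (by linarith) hsa
        _ ≤ qstar s := by
            rw [hqstar s]
            exact le_iSup (fun ℓ' : {ℓ' : EuclideanSpace ℝ (Fin n) // ‖ℓ'‖ = 1} => qU (s • (ℓ' : EuclideanSpace ℝ (Fin n)))) ⟨ℓ, hℓ⟩
        _ ≤ ENNReal.ofReal κ *
              ⨅ ℓ' : {ℓ' : EuclideanSpace ℝ (Fin n) // ‖ℓ'‖ = 1}, qL (s • (ℓ' : EuclideanSpace ℝ (Fin n))) := hcomp s hs1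
        _ ≤ ENNReal.ofReal κ * qL (s • ℓ) := by
            apply mul_le_mul_right
            exact iInf_le (fun ℓ' : {ℓ' : EuclideanSpace ℝ (Fin n) // ‖ℓ'‖ = 1} => qL (s • (ℓ' : EuclideanSpace ℝ (Fin n)))) ⟨ℓ, hℓ⟩
        _ = ENNReal.ofReal κ *
              ∫⁻ h in {h | 0 < |s * w h| ∧ |s * w h| ≤ 1},
                ENNReal.ofReal ((s * w h) ^ 2) ∂μ := by rw [hqL' s]
  -- assemble
  intro r hr
  rw [hqstar r, hqstar 1, mul_comm, ENNReal.mul_iSup]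
  apply iSup_le
  intro ℓ
  calc ENNReal.ofReal (r ^ (2 / κ)) * qU ((1:ℝ) • (ℓ : EuclideanSpace ℝ (Fin n)))
      ≤ qU (r • (ℓ : EuclideanSpace ℝ (Fin n))) := main ℓ r hr
    _ ≤ ⨆ ℓ' : {ℓ' : EuclideanSpace ℝ (Fin n) // ‖ℓ'‖ = 1}, qU (r • (ℓ' : EuclideanSpace ℝ (Fin n))) :=
        le_iSup (fun ℓ' : {ℓ' : EuclideanSpace ℝ (Fin n) // ‖ℓ'‖ = 1} => qU (r • (ℓ' : EuclideanSpace ℝ (Fin n)))) ℓ
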